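/- Let F be a field with char F ≠ 2. An element u = λ₁𝔞 + λ₂𝔟 + λ₃σ of 𝔍(1) satisfies u·u = u if and only if λ₁ = λ₂ = λ₃ = 0, or λ₁ + λ₂ = 1 and λ₃ = 2λ₁λ₂. In particular, the nonzero idempotents of 𝔍(1) form the one-parameter family {λ𝔞 + (1−λ)𝔟 + 2λ(1−λ)σ : λ ∈ F}. -/

import Mathlib

namespace JordanHalf

variable {F : Type*} [Field F]

/-- The multiplication of the 3-dimensional algebra `𝔍(α)` with respect to the basis
`𝔞 = ![1,0,0]`, `𝔟 = ![0,1,0]`, `σ = ![0,0,1]`. -/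
def JmulFun (α : F) (u v : Fin 3 → F) : Fin 3 → F :=
  ![u 0 * v 0 + (u 0 * v 1 + u 1 * v 0) / 2 + (α - 1) / 2 * (u 0 * v 2 + u 2 * v 0),
    u 1 * v 1 + (u 0 * v 1 + u 1 * v 0) / 2 + (α - 1) / 2 * (u 1 * v 2 + u 2 * v 1),
    (u 0 * v 1 + u 1 * v 0) + (α - 1) / 2 * (u 2 * v 2)]

end JordanHalf

open JordanHalf

/-- **Lemma (idempotents of 𝔍(1)).** An element `u = λ₁𝔞 + λ₂𝔟 + λ₃σ` of `𝔍(1)` is an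
idempotent if and only if `λ₁ = λ₂ = λ₃ = 0`, or `λ₁ + λ₂ = 1` and `λ₃ = 2λ₁λ₂`; in
particular the nonzero idempotents form the one-parameter family
`λ𝔞 + (1−λ)𝔟 + 2λ(1−λ)σ`, `λ ∈ F`. -/
theorem idempotents_of_J1 {F : Type*} [Field F] (hchar : (2 : F) ≠ 0) :
    (∀ l₁ l₂ l₃ : F,
      (JmulFun (1 : F) ![l₁, l₂, l₃] ![l₁, l₂, l₃] = ![l₁, l₂, l₃] ↔
        (l₁ = 0 ∧ l₂ = 0 ∧ l₃ = 0) ∨ (l₁ + l₂ = 1 ∧ l₃ = 2 * l₁ * l₂))) ∧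
    {w : Fin 3 → F | JmulFun (1 : F) w w = w ∧ w ≠ 0} =
      {w : Fin 3 → F | ∃ l : F, w = ![l, 1 - l, 2 * l * (1 - l)]} := by
  have key : ∀ l₁ l₂ l₃ : F,
      (JmulFun (1 : F) ![l₁, l₂, l₃] ![l₁, l₂, l₃] = ![l₁, l₂, l₃] ↔
        (l₁ = 0 ∧ l₂ = 0 ∧ l₃ = 0) ∨ (l₁ + l₂ = 1 ∧ l₃ = 2 * l₁ * l₂)) := by
    intro l₁ l₂ l₃
    constructor
    · intro h
      have h0 := congrFun h 0
      have h1 := congrFun h 1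
      have h2 := congrFun h 2
      simp only [JmulFun, Matrix.cons_val_zero, Matrix.cons_val_one, Matrix.head_cons,
        Matrix.cons_val_two, Matrix.tail_cons] at h0 h1 h2
      field_simp at h0 h1 h2
      by_cases hs : l₁ + l₂ = 1
      · right
        refine ⟨hs, ?_⟩
        have h2' : (l₃ - 2 * l₁ * l₂) * 2 = 0 := by linear_combination -h2
        linear_combination (mul_eq_zero.mp h2').resolve_right hchar
      · left
        have e1 : l₁ * (l₁ + l₂ - 1) * 2 = 0 := by linear_combination h0
        have e2 : l₂ * (l₁ + l₂ - 1) * 2 = 0 := by linear_combination h1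
        have e1 : l₁ * (l₁ + l₂ - 1) = 0 := (mul_eq_zero.mp e1).resolve_right hchar
        have e2 : l₂ * (l₁ + l₂ - 1) = 0 := (mul_eq_zero.mp e2).resolve_right hchar
        have hs' : l₁ + l₂ - 1 ≠ 0 := fun hc => hs (by linear_combination hc)
        have hl1 : l₁ = 0 := by
          rcases mul_eq_zero.mp e1 with h | h
          · exact h
          · exact absurd h hs'
        have hl2 : l₂ = 0 := by
          rcases mul_eq_zero.mp e2 with h | h
          · exact h
          · exact absurd h hs'
        refine ⟨hl1, hl2, ?_⟩
        subst hl1 hl2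
        have h2' : l₃ * 2 = 0 := by linear_combination -h2
        exact (mul_eq_zero.mp h2').resolve_right hchar
    · rintro (⟨h1, h2, h3⟩ | ⟨hs, h3⟩)
      · subst h1 h2 h3
        funext i
        fin_cases i <;> simp [JmulFun]
      · funext i
        have h2 : l₂ = 1 - l₁ := by linear_combination hs
        subst h2 h3
        fin_cases i <;> simp [JmulFun] <;> field_simp <;> ring
  refine ⟨key, ?_⟩
  ext w
  have hw : w = ![w 0, w 1, w 2] := by
    funext i; fin_cases i <;> rfl
  simp only [Set.mem_setOf_eq]
  constructor
  · rintro ⟨hmul, hne⟩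
    rw [hw] at hmul
    rcases (key (w 0) (w 1) (w 2)).mp hmul with ⟨e0, e1, e2⟩ | ⟨hs, h3⟩
    · exfalso
      apply hne
      funext i; fin_cases i <;> simpa
    · refine ⟨w 0, ?_⟩
      have hw1 : w 1 = 1 - w 0 := by linear_combination hs
      rw [hw]
      funext i
      fin_cases i
      · rfl
      · simpa using hw1
      · simp [h3, hw1]
  · rintro ⟨l, rfl⟩
    constructor
    · apply (key l (1 - l) (2 * l * (1 - l))).mpr
      right
      exact ⟨by ring, rfl⟩
    · intro hc
      have h0 := congrFun hc 0
      have h1 := congrFun hc 1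
      simp at h0 h1
      rw [h0] at h1
      simp at h1
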